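/- Submodularity of the predimension: for every real number α ≥ 0 and all finite sets s, t of vertices of a simple graph G, δ_α(s ∪ t) + δ_α(s ∩ t) ≤ δ_α(s) + δ_α(t). -/

import Mathlib

/-- The number of edges of `G` with both endpoints in the finite set `s`. -/
noncomputable def eCount {V : Type*} (G : SimpleGraph V) (s : Finset V) : ℕ :=
  {e : Sym2 V | e ∈ G.edgeSet ∧ ∀ v ∈ e, v ∈ s}.ncard

/-- The predimension `δ_α(s) = |s| - α·e(s)`. -/
noncomputable def pdim {V : Type*} (G : SimpleGraph V) (α : ℝ) (s : Finset V) : ℝ :=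
  (s.card : ℝ) - α * (eCount G s : ℝ)

lemma eSet_finite {V : Type*} (G : SimpleGraph V) (s : Finset V) :
    {e : Sym2 V | e ∈ G.edgeSet ∧ ∀ v ∈ e, v ∈ s}.Finite := by
  apply Set.Finite.subset ((s.finite_toSet.prod s.finite_toSet).image (fun p => Sym2.mk p.1 p.2))
  rintro e ⟨-, h⟩
  induction e using Sym2.ind with
  | _ x y => exact ⟨(x, y), ⟨h x (by simp), h y (by simp)⟩, rfl⟩

lemma eCount_supermodular {V : Type*} [DecidableEq V] (G : SimpleGraph V) (s t : Finset V) :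
    eCount G s + eCount G t ≤ eCount G (s ∪ t) + eCount G (s ∩ t) := by
  set A := {e : Sym2 V | e ∈ G.edgeSet ∧ ∀ v ∈ e, v ∈ s} with hA
  set B := {e : Sym2 V | e ∈ G.edgeSet ∧ ∀ v ∈ e, v ∈ t} with hB
  have hfA := eSet_finite G s
  have hfB := eSet_finite G t
  have key : A.ncard + B.ncard = (A ∪ B).ncard + (A ∩ B).ncard := by
    rw [Set.ncard_union_add_ncard_inter A B hfA hfB]
  have h1 : (A ∪ B).ncard ≤ eCount G (s ∪ t) := by
    apply Set.ncard_le_ncard _ (eSet_finite G (s ∪ t))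
    rintro e (⟨he, h⟩ | ⟨he, h⟩) <;>
      exact ⟨he, fun v hv => Finset.mem_union.2 (by first | exact Or.inl (h v hv) | exact Or.inr (h v hv))⟩
  have h2 : (A ∩ B).ncard ≤ eCount G (s ∩ t) := by
    apply Set.ncard_le_ncard _ (eSet_finite G (s ∩ t))
    rintro e ⟨⟨he, h1⟩, ⟨-, h2⟩⟩
    exact ⟨he, fun v hv => Finset.mem_inter.2 ⟨h1 v hv, h2 v hv⟩⟩
  calc eCount G s + eCount G t = (A ∪ B).ncard + (A ∩ B).ncard := key
    _ ≤ _ := Nat.add_le_add h1 h2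

/-- Submodularity of the predimension. -/
theorem pdim_submodular {V : Type*} [DecidableEq V] (G : SimpleGraph V)
    (α : ℝ) (hα : 0 ≤ α) (s t : Finset V) :
    pdim G α (s ∪ t) + pdim G α (s ∩ t) ≤ pdim G α s + pdim G α t := by
  have hcard : ((s ∪ t).card : ℝ) + ((s ∩ t).card : ℝ) = (s.card : ℝ) + (t.card : ℝ) := by
    rw [← Nat.cast_add, ← Nat.cast_add, Finset.card_union_add_card_inter]
  have he : (eCount G s : ℝ) + (eCount G t : ℝ) ≤ (eCount G (s ∪ t) : ℝ) + (eCount G (s ∩ t) : ℝ) := by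
    rw [← Nat.cast_add, ← Nat.cast_add]
    exact_mod_cast eCount_supermodular G s t
  simp only [pdim]
  nlinarith [mul_le_mul_of_nonneg_left he hα]
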